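/- Let A be an irreducible n×n max-plus matrix with maximum cycle mean λ(A) = 0 and let Γ be a cycle of G(A) of weight 0 (a critical cycle). Suppose k₀ ∈ ℕ and W is a walk from i to j with ℓ(W) ≡ k₀ (mod ℓ(Γ)) that visits a node of Γ and has maximum weight among all such walks of length ≥ n² in the class k₀ mod ℓ(Γ). Then (A^⊗k)_{i,j} ≥ A(W) for every k ≥ n² with k ≡ k₀ (mod ℓ(Γ)). -/

import Mathlib

/-- Max-plus matrix product: `(A ⊗ B) i j = max_h (A i h + B h j)` over `ℝ ∪ {-∞}`. -/
noncomputable def mpMul {n : ℕ} (A B : Fin n → Fin n → EReal) : Fin n → Fin n → EReal :=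
  fun i j => ⨆ h : Fin n, A i h + B h j

/-- Max-plus matrix power. -/
noncomputable def mpPow {n : ℕ} (A : Fin n → Fin n → EReal) : ℕ → Fin n → Fin n → EReal
  | 0 => fun i j => if i = j then 0 else ⊥
  | k + 1 => mpMul A (mpPow A k)

/-- `f` lists the successive nodes of a walk of length `k` in `G(A)`:
all consecutive pairs are edges, i.e., have finite weight. -/
def IsWalk {n : ℕ} (A : Fin n → Fin n → EReal) {k : ℕ} (f : Fin (k + 1) → Fin n) : Prop :=
  ∀ t : Fin k, A (f t.castSucc) (f t.succ) ≠ ⊥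

/-- The weight of a walk: sum of the weights of its edges. -/
noncomputable def walkWeight {n : ℕ} (A : Fin n → Fin n → EReal) {k : ℕ}
    (f : Fin (k + 1) → Fin n) : EReal :=
  ∑ t : Fin k, A (f t.castSucc) (f t.succ)

/-- A cycle: a nonempty closed walk in which only the start and end node coincide. -/
def IsCycle {n : ℕ} (A : Fin n → Fin n → EReal) {k : ℕ} (f : Fin (k + 1) → Fin n) : Prop :=
  0 < k ∧ IsWalk A f ∧ f 0 = f (Fin.last k) ∧
    Function.Injective (fun t : Fin k => f t.castSucc)


namespace PumpAux

variable {n : ℕ}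

def LC (A : Fin n → Fin n → EReal) (l : List (Fin n)) : Prop :=
  l.Chain' (fun a b => A a b ≠ ⊥)

noncomputable def lw (A : Fin n → Fin n → EReal) : List (Fin n) → EReal
  | [] => 0
  | [_] => 0
  | a :: b :: t => A a b + lw A (b :: t)

variable {A : Fin n → Fin n → EReal}

@[simp] lemma lw_nil : lw A [] = 0 := rfl
@[simp] lemma lw_single (a : Fin n) : lw A [a] = 0 := rfl
@[simp] lemma lw_cons_cons (a b : Fin n) (t : List (Fin n)) :
    lw A (a :: b :: t) = A a b + lw A (b :: t) := rfl

lemma lw_split (p : List (Fin n)) (u : Fin n) (q : List (Fin n)) :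
    lw A (p ++ u :: q) = lw A (p ++ [u]) + lw A (u :: q) := by
  induction p with
  | nil => simp
  | cons a p ih =>
    cases p with
    | nil => simp [add_assoc]
    | cons b p' =>
      simp only [List.cons_append, lw_cons_cons] at *
      rw [ih, add_assoc]

lemma lc_split {p : List (Fin n)} {u : Fin n} {q : List (Fin n)} :
    LC A (p ++ u :: q) ↔ LC A (p ++ [u]) ∧ LC A (u :: q) := by
  unfold LC List.Chain'
  rw [show p ++ u :: q = (p ++ [u]) ++ q by simp, List.isChain_append, List.isChain_cons,
    List.isChain_append]
  simp [List.getLast?_concat]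
  tauto

lemma head?_append_cons (p : List (Fin n)) (u : Fin n) (q q' : List (Fin n)) :
    (p ++ u :: q).head? = (p ++ u :: q').head? := by
  cases p <;> simp

/-- Glue two walks sharing endpoint `u`. -/
lemma glueW {c₁ c₂ : List (Fin n)} {u : Fin n}
    (h₁ : LC A c₁) (h₂ : LC A c₂) (hl : c₁.getLast? = some u) (hh : c₂.head? = some u) :
    LC A (c₁ ++ c₂.tail) ∧ lw A (c₁ ++ c₂.tail) = lw A c₁ + lw A c₂ ∧
    (c₁ ++ c₂.tail).head? = c₁.head? ∧ (c₁ ++ c₂.tail).getLast? = c₂.getLast? ∧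
    (c₁ ++ c₂.tail).length + 1 = c₁.length + c₂.length := by
  obtain ⟨w, rfl⟩ : ∃ w, c₂ = u :: w := by
    cases c₂ with
    | nil => simp at hh
    | cons a w => simp at hh; exact ⟨w, by rw [hh]⟩
  obtain ⟨x, rfl⟩ : ∃ x, c₁ = x ++ [u] := by
    have hne : c₁ ≠ [] := by rintro rfl; simp at hl
    refine ⟨c₁.dropLast, ?_⟩
    have h2 := List.dropLast_append_getLast hne
    rw [List.getLast?_eq_getLast hne, Option.some_inj] at hl
    rw [← hl]; exact h2.symm
  have key : x ++ [u] ++ (u :: w).tail = x ++ u :: w := by simp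
  rw [key]
  refine ⟨?_, ?_, ?_, ?_, ?_⟩
  · exact lc_split.2 ⟨h₁, h₂⟩
  · exact lw_split x u w
  · cases x <;> simp
  · rw [List.getLast?_append_cons]
  · simp; omega

lemma lw_ofFn : ∀ {k : ℕ} (f : Fin (k+1) → Fin n), lw A (List.ofFn f) = walkWeight A f := by
  intro k
  induction k with
  | zero => intro f; simp [walkWeight, List.ofFn_succ, lw]
  | succ k ih =>
    intro f
    rw [List.ofFn_succ, List.ofFn_succ]
    show A (f 0) (f (Fin.succ 0)) +
      lw A (f (Fin.succ 0) :: List.ofFn fun i => f (Fin.succ (Fin.succ i))) = _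
    rw [show (f (Fin.succ 0) :: List.ofFn fun i => f (Fin.succ (Fin.succ i)))
        = List.ofFn (fun i => f (Fin.succ i)) by rw [List.ofFn_succ]]
    rw [ih (fun i => f (Fin.succ i))]
    unfold walkWeight
    rw [Fin.sum_univ_succ, show (Fin.castSucc 0 : Fin (k+2)) = 0 from rfl]
    congr 1

lemma lc_ofFn_iff {k : ℕ} (f : Fin (k+1) → Fin n) :
    LC A (List.ofFn f) ↔ IsWalk A f := by
  unfold LC List.Chain'
  rw [List.isChain_iff_getElem]
  constructor
  · intro h t
    have ht : (t : ℕ) + 1 < (List.ofFn f).length := by simp [t.isLt]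
    have := h t ht
    simp only [List.get_eq_getElem, List.getElem_ofFn] at this
    convert this using 2 <;> exact congrArg f (Fin.ext rfl)
  · intro h i hi
    simp only [List.length_ofFn] at hi
    have := h ⟨i, by omega⟩
    simp only [List.get_eq_getElem, List.getElem_ofFn]
    convert this using 2 <;> exact congrArg f (Fin.ext rfl)

lemma decompAux {α : Type*} {c : List α} {s t : ℕ} (hst : s < t) (ht : t < c.length)
    (he : c.get ⟨s, Nat.lt_trans hst ht⟩ = c.get ⟨t, ht⟩) :
    ∃ (x y z : List α), c = x ++ (c.get ⟨t, ht⟩) :: (y ++ (c.get ⟨t, ht⟩) :: z) ∧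
      x.length = s ∧ y.length + 1 = t - s ∧ z.length + (t + 1) = c.length := by
  have htk : (c.take t).length = t := by simp; omega
  refine ⟨c.take s, (c.take t).drop (s+1), c.drop (t+1), ?_, ?_, ?_, ?_⟩
  · have h1 : c.drop (s+1) = (c.take t).drop (s+1) ++ c.drop t := by
      conv_lhs => rw [← List.take_append_drop t c]
      rw [List.drop_append, htk,
        show s + 1 - t = 0 by omega, List.drop_zero]
    conv_lhs => rw [← List.take_append_drop s c,
      List.drop_eq_getElem_cons (show s < c.length by omega), h1,
      List.drop_eq_getElem_cons ht]
    simp only [List.get_eq_getElem] at he ⊢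
    rw [← he]
  · simp; omega
  · simp; omega
  · simp; omega


lemma closed_nonpos (hL : ∀ (k : ℕ) (f : Fin (k+1) → Fin n), IsCycle A f → walkWeight A f ≤ 0) :
    ∀ (N : ℕ) (c : List (Fin n)), c.length ≤ N → LC A c → c ≠ [] →
      c.head? = c.getLast? → lw A c ≤ 0 := by
  intro N
  induction N with
  | zero =>
    intro c hlen _ hne _
    cases c
    · exact absurd rfl hne
    · simp at hlen
  | succ N IH =>
    intro c hlen hc hne hcl
    rcases c with _ | ⟨a, c'⟩
    · exact absurd rfl hne
    rcases c' with _ | ⟨b, t0⟩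
    · simp
    have hlen2 : 2 ≤ (a :: b :: t0).length := by simp
    set c : List (Fin n) := a :: b :: t0 with hcdef
    have hcne : c ≠ [] := by simp [hcdef]
    by_cases hnd : c.dropLast.Nodup
    · -- elementary cycle
      set k := c.length - 1 with hkdef
      have hk : 0 < k := by rw [hkdef]; omega
      have hck : c.length = k + 1 := by rw [hkdef]; omega
      set f : Fin (k+1) → Fin n := fun r => c.get ⟨r, by omega⟩ with hfdef
      have hofn : List.ofFn f = c := by
        apply List.ext_getElem (by rw [List.length_ofFn, hck])
        intro i h1 h2
        rw [List.getElem_ofFn]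
        simp [hfdef, List.get_eq_getElem]
      have hcyc : IsCycle A f := by
        refine ⟨hk, ?_, ?_, ?_⟩
        · rw [← lc_ofFn_iff]; rw [hofn]; exact hc
        · have h0 : f 0 = c.get ⟨0, by omega⟩ := rfl
          have hlast : f (Fin.last k) = c.get ⟨k, by omega⟩ := rfl
          rw [h0, hlast]
          have hgl : c.getLast hcne = c.get ⟨k, by omega⟩ := by
            rw [List.getLast_eq_getElem]
            simp [hck, List.get_eq_getElem]
          rw [List.getLast?_eq_getLast hcne] at hcl
          have : c.head? = some a := by rw [hcdef]; rfl
          rw [this] at hcl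
          have ha : a = c.getLast hcne := by exact Option.some_inj.1 hcl
          have h0a : c.get ⟨0, by omega⟩ = a := rfl
          rw [h0a, ha, hgl]
        · intro t₁ t₂ hEq
          have hdl : c.dropLast.length = k := by simp [hck]
          have inj := List.nodup_iff_injective_get.1 hnd
          have e1 : ∀ (r : Fin k), f r.castSucc = c.dropLast.get ⟨r, by omega⟩ := by
            intro r
            simp only [hfdef, List.get_eq_getElem, List.getElem_dropLast]
            rfl
          have := inj (a₁ := ⟨t₁, by omega⟩) (a₂ := ⟨t₂, by omega⟩) ?_
          · exact Fin.ext (by exact congrArg Fin.val this ▸ rfl)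
          · rw [← e1 t₁, ← e1 t₂]; exact hEq
      calc lw A c = lw A (List.ofFn f) := by rw [hofn]
        _ = walkWeight A f := lw_ofFn f
        _ ≤ 0 := hL k f hcyc
    · -- find duplicate, split off a shorter closed walk
      obtain ⟨s', t', hgeq, hneq⟩ := Function.not_injective_iff.1
        (fun hinj => hnd (List.nodup_iff_injective_get.2 hinj))
      have hdl : c.dropLast.length = c.length - 1 := by simp
      have hs'lt : (s' : ℕ) < c.length - 1 := by have := s'.isLt; omega
      have ht'lt : (t' : ℕ) < c.length - 1 := by have := t'.isLt; omega
      -- normalize to s < t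
      obtain ⟨s, t, hst, hlt, heq⟩ :
          ∃ (s t : ℕ) (_ : s < t) (_ : t < c.length - 1),
            c.get ⟨s, by omega⟩ = c.get ⟨t, by omega⟩ := by
        rcases Ne.lt_or_gt hneq with h | h
        · refine ⟨s', t', h, ht'lt, ?_⟩
          have := hgeq
          simp only [List.get_eq_getElem, List.getElem_dropLast] at this
          simp only [List.get_eq_getElem]
          convert this using 2
        · refine ⟨t', s', h, hs'lt, ?_⟩
          have := hgeq.symm
          simp only [List.get_eq_getElem, List.getElem_dropLast] at this
          simp only [List.get_eq_getElem]
          convert this using 2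
      have ht : t < c.length := by omega
      obtain ⟨x, y, z, hdecomp, hxl, hyl, hzl⟩ := decompAux hst ht (by
        simp only [List.get_eq_getElem] at heq ⊢; convert heq using 2)
      set u := c.get ⟨t, ht⟩ with hudef
      have hzne : z ≠ [] := by
        have : z.length ≥ 1 := by omega
        cases z
        · simp at this
        · simp
      -- chains
      have hc1 : LC A (x ++ [u]) ∧ LC A (u :: (y ++ u :: z)) := by
        rw [← lc_split]; rw [← hdecomp]; exact hc
      have hc2 : LC A ((u :: y) ++ [u]) ∧ LC A (u :: z) := by
        rw [← lc_split (p := u :: y) (u := u) (q := z)]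
        have : (u :: y) ++ u :: z = u :: (y ++ u :: z) := by simp
        rw [this]; exact hc1.2
      -- outer walk
      have houter : LC A (x ++ u :: z) := lc_split.2 ⟨hc1.1, hc2.2⟩
      have houter_len : (x ++ u :: z).length + (y.length + 1) = c.length := by
        simp only [List.length_append, List.length_cons]
        omega
      have hcyc_len : (u :: (y ++ [u])).length = y.length + 2 := by simp
      -- head/last of outer
      have hohead : (x ++ u :: z).head? = c.head? := by
        rw [hdecomp]; exact head?_append_cons x u z (y ++ u :: z)
      have holast : (x ++ u :: z).getLast? = c.getLast? := by
        have e1 : (x ++ u :: z).getLast? = (u :: z).getLast? :=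
          List.getLast?_append_cons _ _ _
        have e2 : c.getLast? = (u :: z).getLast? := by
          rw [hdecomp, List.getLast?_append_cons,
            show u :: (y ++ u :: z) = (u :: y) ++ u :: z by simp,
            List.getLast?_append_cons]
        rw [e1, e2]
      have hcyc_lc : LC A (u :: (y ++ [u])) := by
        rw [show u :: (y ++ [u]) = (u :: y) ++ [u] by simp]
        exact hc2.1
      have hcyc_closed : (u :: (y ++ [u])).head? = (u :: (y ++ [u])).getLast? := by
        rw [show u :: (y ++ [u]) = (u :: y) ++ [u] by simp, List.getLast?_concat]
        rfl
      have houter_le : lw A (x ++ u :: z) ≤ 0 := by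
        apply IH (x ++ u :: z) (by omega) houter (by simp) (hohead.trans hcl ▸ holast ▸ rfl)
      have hcyc_le : lw A (u :: (y ++ [u])) ≤ 0 := by
        apply IH _ (by simp; omega) hcyc_lc (by simp) hcyc_closed
      have hw : lw A c = lw A (x ++ u :: z) + lw A (u :: (y ++ [u])) := by
        rw [hdecomp, lw_split x u (y ++ u :: z),
          show u :: (y ++ u :: z) = (u :: y) ++ u :: z by simp,
          lw_split (u :: y) u z, lw_split x u z,
          show u :: (y ++ [u]) = (u :: y) ++ [u] by simp]
        abel
      rw [hw]
      exact add_nonpos houter_le hcyc_le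


/-- `Marked ds c`: the walk `c` contains a left-to-right sequence of disjoint closed
subwalks ("cycles") whose edge lengths are listed in `ds`. -/
def Marked : List ℕ → List (Fin n) → Prop
  | [], _ => True
  | d :: ds, c => ∃ (x : List (Fin n)) (u : Fin n) (y rest : List (Fin n)),
      c = x ++ u :: (y ++ u :: rest) ∧ y.length + 1 = d ∧ Marked ds (u :: rest)

lemma marked_one_le : ∀ (ds : List ℕ) (c : List (Fin n)), Marked ds c → ∀ d ∈ ds, 1 ≤ d := by
  intro ds
  induction ds with
  | nil => intro c _ d hd; simp at hd
  | cons d' ds ih =>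
    rintro c ⟨x, u, y, rest, _, hlen, hm⟩ d hd
    rcases List.mem_cons.1 hd with rfl | hd
    · omega
    · exact ih _ hm d hd

lemma extract (hn : 0 < n) :
    ∀ (N : ℕ) (c : List (Fin n)), c.length ≤ N →
      ∃ ds : List ℕ, Marked ds c ∧ (c.length - 1) / n ≤ ds.length := by
  intro N
  induction N with
  | zero =>
    intro c hlen
    refine ⟨[], trivial, ?_⟩
    have : c.length = 0 := by omega
    simp [this]
  | succ N IH =>
    intro c hlen
    by_cases hsmall : c.length - 1 < n
    · exact ⟨[], trivial, by rw [Nat.div_eq_of_lt hsmall]; exact Nat.zero_le _⟩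
    · have hcl : n + 1 ≤ c.length := by omega
      obtain ⟨r₁, r₂, hne, heq⟩ := Fintype.exists_ne_map_eq_of_card_lt
        (fun r : Fin (n+1) => c.get ⟨r, by omega⟩) (by simp)
      obtain ⟨s, t, hst, hts, heq2⟩ :
          ∃ (s t : ℕ) (_ : s < t) (_ : t ≤ n),
            c.get ⟨s, by omega⟩ = c.get ⟨t, by omega⟩ := by
        rcases Ne.lt_or_gt hne with h | h
        · refine ⟨r₁, r₂, h, by omega, ?_⟩
          simpa using heq
        · refine ⟨r₂, r₁, h, by omega, ?_⟩
          simpa using heq.symm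
      have ht : t < c.length := by omega
      obtain ⟨x, y, z, hdecomp, hxl, hyl, hzl⟩ := decompAux hst ht (by
        simp only [List.get_eq_getElem] at heq2 ⊢; convert heq2 using 2)
      set u := c.get ⟨t, ht⟩ with hudef
      have hrec_len : (u :: z).length ≤ N := by simp; omega
      obtain ⟨ds, hm, hcount⟩ := IH (u :: z) hrec_len
      refine ⟨(y.length + 1) :: ds, ⟨x, u, y, z, hdecomp, rfl, hm⟩, ?_⟩
      have hz' : (u :: z).length - 1 = z.length := by simp
      rw [hz'] at hcount
      have hstep : (c.length - 1) / n ≤ z.length / n + 1 := by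
        have h1 : c.length - 1 ≤ z.length + n := by omega
        calc (c.length - 1) / n ≤ (z.length + n) / n := Nat.div_le_div_right h1
          _ = z.length / n + 1 := Nat.add_div_right _ hn
      simp only [List.length_cons]
      omega


lemma head?_eq_cons {α : Type*} {c : List α} {u : α} (h : c.head? = some u) :
    ∃ w, c = u :: w := by
  cases c with
  | nil => simp at h
  | cons a w => simp at h; exact ⟨w, by rw [h]⟩

lemma cyc_head {u : Fin n} (y : List (Fin n)) : ((u :: y) ++ [u]).head? = some u := by simp

lemma cyc_last {u : Fin n} (y : List (Fin n)) : ((u :: y) ++ [u]).getLast? = some u :=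
  List.getLast?_concat

/-- Remove the consecutive block of marked cycles with indices in `[a, b)`. -/
lemma removeBlock (hL : ∀ (k : ℕ) (f : Fin (k+1) → Fin n), IsCycle A f → walkWeight A f ≤ 0) :
    ∀ (ds : List ℕ) (c : List (Fin n)) (a b : ℕ), Marked ds c → LC A c → a ≤ b →
      b ≤ ds.length →
      ∃ c', LC A c' ∧ c'.head? = c.head? ∧ c'.getLast? = c.getLast? ∧
        c'.length + (ds.take b).sum = c.length + (ds.take a).sum ∧ lw A c ≤ lw A c' := by
  intro ds
  induction ds with
  | nil =>
    intro c a b _ hc hab hble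
    have ha : a = 0 := by simp at hble; omega
    have hb : b = 0 := by simp at hble; omega
    exact ⟨c, hc, rfl, rfl, by simp [ha, hb], le_refl _⟩
  | cons d ds ih =>
    intro c a b hm hc hab hble
    obtain ⟨x, u, y, rest, hdec, hdlen, hm'⟩ := hm
    subst hdec
    have hC1 : LC A (x ++ [u]) ∧ LC A (u :: (y ++ u :: rest)) := lc_split.1 hc
    have hC2 : LC A ((u :: y) ++ [u]) ∧ LC A (u :: rest) := by
      rw [← lc_split (p := u :: y) (u := u) (q := rest)]
      rw [show (u :: y) ++ u :: rest = u :: (y ++ u :: rest) by simp]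
      exact hC1.2
    have hcyc_le : lw A ((u :: y) ++ [u]) ≤ 0 := by
      apply closed_nonpos hL (((u :: y) ++ [u]).length) _ le_rfl hC2.1 (by simp)
      rw [cyc_head, cyc_last]
    have hlast_c : (x ++ u :: (y ++ u :: rest)).getLast? = (u :: rest).getLast? := by
      rw [List.getLast?_append_cons,
        show u :: (y ++ u :: rest) = (u :: y) ++ u :: rest by simp,
        List.getLast?_append_cons]
    match a, b, hab with
    | 0, 0, _ => exact ⟨_, hc, rfl, rfl, by simp, le_refl _⟩
    | 0, (b' + 1), _ =>
      obtain ⟨c'', hc'', hh'', hl'', hlen'', hw''⟩ :=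
        ih (u :: rest) 0 b' hm' hC2.2 (Nat.zero_le _) (by simpa using hble)
      obtain ⟨w, rfl⟩ := head?_eq_cons (by rw [hh'']; rfl : c''.head? = some u)
      refine ⟨x ++ u :: w, lc_split.2 ⟨hC1.1, hc''⟩, ?_, ?_, ?_, ?_⟩
      · exact head?_append_cons x u w (y ++ u :: rest)
      · rw [List.getLast?_append_cons, hlast_c]; exact hl''
      · simp only [List.take_succ_cons, List.take_zero, List.sum_cons, List.sum_nil,
          List.length_append, List.length_cons] at hlen'' ⊢
        omega
      · calc lw A (x ++ u :: (y ++ u :: rest))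
            = lw A (x ++ [u]) + lw A (u :: (y ++ u :: rest)) := lw_split _ _ _
          _ = lw A (x ++ [u]) + (lw A ((u :: y) ++ [u]) + lw A (u :: rest)) := by
              rw [show u :: (y ++ u :: rest) = (u :: y) ++ u :: rest by simp,
                lw_split (u :: y) u rest]
          _ ≤ lw A (x ++ [u]) + (0 + lw A (u :: rest)) := by
              apply add_le_add_right (add_le_add_left hcyc_le _)
          _ = lw A (x ++ [u]) + lw A (u :: rest) := by rw [zero_add]
          _ ≤ lw A (x ++ [u]) + lw A (u :: w) := add_le_add_right hw'' _
          _ = lw A (x ++ u :: w) := (lw_split _ _ _).symm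
    | (a' + 1), (b' + 1), _ =>
      obtain ⟨c'', hc'', hh'', hl'', hlen'', hw''⟩ :=
        ih (u :: rest) a' b' hm' hC2.2 (by omega) (by simpa using hble)
      obtain ⟨w, rfl⟩ := head?_eq_cons (by rw [hh'']; rfl : c''.head? = some u)
      have hinner : LC A (u :: (y ++ u :: w)) := by
        rw [show u :: (y ++ u :: w) = (u :: y) ++ u :: w by simp]
        rw [show (u :: y) ++ u :: w = ((u :: y) ++ [u]) ++ w by simp]
        rw [show ((u :: y) ++ [u]) ++ w = (u :: y) ++ u :: w by simp]
        exact lc_split.2 ⟨hC2.1, hc''⟩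
      refine ⟨x ++ u :: (y ++ u :: w), lc_split.2 ⟨hC1.1, hinner⟩, ?_, ?_, ?_, ?_⟩
      · exact head?_append_cons x u (y ++ u :: w) (y ++ u :: rest)
      · rw [hlast_c, List.getLast?_append_cons,
          show u :: (y ++ u :: w) = (u :: y) ++ u :: w by simp,
          List.getLast?_append_cons]
        exact hl''
      · simp only [List.take_succ_cons, List.sum_cons,
          List.length_append, List.length_cons] at hlen'' ⊢
        omega
      · calc lw A (x ++ u :: (y ++ u :: rest))
            = lw A (x ++ [u]) + (lw A ((u :: y) ++ [u]) + lw A (u :: rest)) := by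
              rw [lw_split x u (y ++ u :: rest),
                show u :: (y ++ u :: rest) = (u :: y) ++ u :: rest by simp,
                lw_split (u :: y) u rest]
          _ ≤ lw A (x ++ [u]) + (lw A ((u :: y) ++ [u]) + lw A (u :: w)) := by
              apply add_le_add_right (add_le_add_right hw'' _)
          _ = lw A (x ++ u :: (y ++ u :: w)) := by
              rw [lw_split x u (y ++ u :: w),
                show u :: (y ++ u :: w) = (u :: y) ++ u :: w by simp,
                lw_split (u :: y) u w]


lemma list_le_pow : ∀ (k : ℕ) (c : List (Fin n)), LC A c → c.length = k + 1 →
    ∀ i j : Fin n, c.head? = some i → c.getLast? = some j → lw A c ≤ mpPow A k i j := by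
  intro k
  induction k with
  | zero =>
    intro c hc hlen i j hh hl
    obtain ⟨w, rfl⟩ := head?_eq_cons hh
    have hw : w = [] := by
      cases w
      · rfl
      · simp at hlen
    subst hw
    have : i = j := by simpa using hl
    subst this
    simp [mpPow]
  | succ k ih =>
    intro c hc hlen i j hh hl
    obtain ⟨w, rfl⟩ := head?_eq_cons hh
    cases w with
    | nil => simp at hlen
    | cons b t =>
      have hlc' : LC A (b :: t) := List.IsChain.tail hc
      have hrec := ih (b :: t) hlc' (by simpa using hlen) b j rfl (by
        rw [← hl]; simp)
      calc lw A (i :: b :: t) = A i b + lw A (b :: t) := rfl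
        _ ≤ A i b + mpPow A k b j := add_le_add_right hrec _
        _ ≤ ⨆ h : Fin n, A i h + mpPow A k h j :=
            le_iSup (fun h : Fin n => A i h + mpPow A k h j) b
        _ = mpPow A (k+1) i j := rfl

lemma len_le_sum : ∀ (l : List ℕ), (∀ d ∈ l, 1 ≤ d) → l.length ≤ l.sum := by
  intro l
  induction l with
  | nil => simp
  | cons d l ih =>
    intro h
    have h1 := h d (by simp)
    have h2 := ih (fun e he => h e (by simp [he]))
    simp only [List.length_cons, List.sum_cons]
    omega

lemma sum_take_lt {ds : List ℕ} (hds : ∀ d ∈ ds, 1 ≤ d) {r r' : ℕ} (hrr : r < r')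
    (hr' : r' ≤ ds.length) : (ds.take r).sum < (ds.take r').sum := by
  have hsplit : ds.take r' = ds.take r ++ (ds.drop r).take (r' - r) := by
    rw [← List.take_add (l := ds) (i := r) (j := r' - r)]
    congr 1
    omega
  rw [hsplit, List.sum_append]
  have hne : 0 < ((ds.drop r).take (r' - r)).sum := by
    have hlen : 0 < ((ds.drop r).take (r' - r)).length := by
      simp only [List.length_take, List.length_drop]
      omega
    have hall : ∀ d ∈ (ds.drop r).take (r' - r), 1 ≤ d := by
      intro d hd
      exact hds d (List.mem_of_mem_drop (List.mem_of_mem_take hd))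
    have := len_le_sum _ hall
    omega
  exact Nat.lt_add_of_pos_right hne

lemma div_add_div_ge {m : ℕ} (hm : 0 < m) (a b : ℕ) : (a + b) / m ≤ a / m + b / m + 1 := by
  rw [Nat.add_div hm]
  split <;> omega


lemma pumpTail {ρ : List (Fin n)} {v : Fin n} (hρ : LC A ρ) (hρh : ρ.head? = some v)
    (hρl : ρ.getLast? = some v) (hρw : lw A ρ = 0) :
    ∀ (m : ℕ) (c : List (Fin n)), LC A c → c.head? = some v →
      ∃ c', LC A c' ∧ c'.head? = some v ∧ c'.getLast? = c.getLast? ∧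
        c'.length = c.length + m * (ρ.length - 1) ∧ lw A c' = lw A c := by
  intro m
  induction m with
  | zero =>
    intro c hc hch
    exact ⟨c, hc, hch, rfl, by simp, rfl⟩
  | succ m ih =>
    intro c hc hch
    obtain ⟨c'', h1, h2, h3, h4, h5⟩ := ih c hc hch
    obtain ⟨hg1, hg2, hg3, hg4, hg5⟩ := glueW hρ h1 hρl h2
    refine ⟨ρ ++ c''.tail, hg1, by rw [hg3, hρh], by rw [hg4, h3], ?_,
      by rw [hg2, hρw, zero_add, h5]⟩
    have hρne : ρ ≠ [] := by rintro rfl; simp at hρh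
    have hρ1 : 1 ≤ ρ.length := List.length_pos_iff.2 hρne
    rw [Nat.succ_mul]
    omega

lemma rotation {G : List (Fin n)} {h₀ : Fin n} (hG : LC A G) (hGh : G.head? = some h₀)
    (hGl : G.getLast? = some h₀) {v : Fin n} (hv : v ∈ G) :
    ∃ ρ, LC A ρ ∧ ρ.head? = some v ∧ ρ.getLast? = some v ∧ ρ.length = G.length ∧
      lw A ρ = lw A G := by
  obtain ⟨x, z, rfl⟩ := List.append_of_mem hv
  by_cases hx : x = []
  · subst hx
    have : h₀ = v := by simpa using hGh.symm
    subst this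
    exact ⟨[] ++ h₀ :: z, hG, rfl, by simpa using hGl, rfl, rfl⟩
  · by_cases hz : z = []
    · subst hz
      have hvh : v = h₀ := by
        have := List.getLast?_concat (l := x) (a := v)
        rw [this] at hGl
        exact Option.some_inj.1 hGl
      refine ⟨x ++ [v], hG, ?_, hGl.trans (by rw [hvh]), rfl, rfl⟩
      rw [hGh, hvh]
    · obtain ⟨a, x', rfl⟩ := List.exists_cons_of_ne_nil hx
      have hsplit := lc_split.1 hG
      have hlast : (v :: z).getLast? = some h₀ := by
        rw [← List.getLast?_append_cons (a :: x') v z]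
        exact hGl
      have hh : (a :: x' ++ [v]).head? = some h₀ := by
        have : a = h₀ := by simpa using hGh
        simp [this]
      obtain ⟨hg1, hg2, hg3, hg4, hg5⟩ := glueW hsplit.2 hsplit.1 hlast hh
      refine ⟨(v :: z) ++ (a :: x' ++ [v]).tail, hg1, by rw [hg3]; rfl, ?_, ?_, ?_⟩
      · rw [hg4, List.getLast?_concat]
      · simp at hg5 ⊢
        omega
      · rw [hg2, lw_split (a :: x') v z]
        exact add_comm _ _


lemma getLast?_eq_concat {α : Type*} {c : List α} {u : α} (h : c.getLast? = some u) :
    ∃ w, c = w ++ [u] := by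
  have hne : c ≠ [] := by rintro rfl; simp at h
  refine ⟨c.dropLast, ?_⟩
  have h2 := List.dropLast_append_getLast hne
  rw [List.getLast?_eq_getLast hne, Option.some_inj] at h
  rw [← h]; exact h2.symm

lemma take_sum_append (ds₁ ds₂ : List ℕ) (r : ℕ) :
    ((ds₁ ++ ds₂).take r).sum
      = (ds₁.take (min r ds₁.length)).sum + (ds₂.take (r - ds₁.length)).sum := by
  rw [List.take_append, List.sum_append]
  congr 2
  rw [List.take_eq_take_iff]
  omega

lemma loop {lΓ : ℕ} (k : ℕ) (P : Fin n → Prop)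
    (hrot : ∀ v, P v → ∃ ρ, LC A ρ ∧ ρ.head? = some v ∧ ρ.getLast? = some v ∧
      ρ.length = lΓ + 1 ∧ lw A ρ = 0)
    (hham : lΓ = n → ∀ w : Fin n, P w)
    (hL : ∀ (k' : ℕ) (f : Fin (k'+1) → Fin n), IsCycle A f → walkWeight A f ≤ 0)
    (hn : 0 < n) (hl1 : 0 < lΓ) (hln : lΓ ≤ n) (hk : n ^ 2 ≤ k) :
    ∀ L, ∀ (x y : List (Fin n)) (v : Fin n), P v → LC A (x ++ v :: y) →
      x.length + y.length = L → L % lΓ = k % lΓ →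
      ∃ c, LC A c ∧ c.head? = (x ++ v :: y).head? ∧
        c.getLast? = (x ++ v :: y).getLast? ∧
        c.length = k + 1 ∧ lw A (x ++ v :: y) ≤ lw A c := by
  intro L
  induction L using Nat.strong_induction_on with
  | _ L IH =>
  intro x y v hv hc hlen hmod
  by_cases hLk : L ≤ k
  · -- pump up to length exactly k
    have hdvd : lΓ ∣ k - L := (Nat.modEq_iff_dvd' hLk).1 hmod
    have hmul : (k - L) / lΓ * lΓ = k - L := Nat.div_mul_cancel hdvd
    obtain ⟨ρ, hρ1, hρ2, hρ3, hρ4, hρ5⟩ := hrot v hv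
    obtain ⟨c₂, hc1, hc2, hc3, hc4, hc5⟩ :=
      pumpTail hρ1 hρ2 hρ3 hρ5 ((k - L) / lΓ) (v :: y) (lc_split.1 hc).2 rfl
    obtain ⟨hg1, hg2, hg3, hg4, hg5⟩ :=
      glueW (lc_split.1 hc).1 hc1 List.getLast?_concat hc2
    refine ⟨(x ++ [v]) ++ c₂.tail, hg1, ?_, ?_, ?_, ?_⟩
    · rw [hg3]
      exact head?_append_cons x v [] y
    · rw [hg4, hc3]
      exact (List.getLast?_append_cons x v y).symm
    · rw [hρ4] at hc4
      have h6 : c₂.length = c₂.tail.length + 1 := by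
        cases c₂
        · simp at hc2
        · simp
      simp only [List.length_cons, Nat.add_sub_cancel] at hc4
      rw [hmul] at hc4
      simp only [List.length_append, List.length_cons, List.length_nil] at hg5 ⊢
      omega
    · rw [hg2, hc5, lw_split x v y]
  · push_neg at hLk
    have hLn : n * n + 1 ≤ L := by
      have : n * n ≤ k := by nlinarith [hk, sq_nonneg n]
      omega
    -- choose a split through a node of Γ with enough room for extraction
    obtain ⟨x₀, v₀, y₀, hv₀, hweq, hcount⟩ :
        ∃ (x₀ : List (Fin n)) (v₀ : Fin n) (y₀ : List (Fin n)), P v₀ ∧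
          x₀ ++ v₀ :: y₀ = x ++ v :: y ∧
          lΓ ≤ x₀.length / n + y₀.length / n := by
      by_cases hH : lΓ = n
      · cases x with
        | nil =>
          refine ⟨[], v, y, hv, rfl, ?_⟩
          have hyL : y.length = L := by simpa using hlen
          have : n ≤ y.length / n := by
            rw [Nat.le_div_iff_mul_le hn]
            omega
          simpa [hH] using this
        | cons a x' =>
          refine ⟨[], a, x' ++ v :: y, hham hH a, by simp, ?_⟩
          have hyL : (x' ++ v :: y).length = L := by
            simp only [List.length_append, List.length_cons]
            simp only [List.length_cons] at hlen
            omega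
          have : n ≤ (x' ++ v :: y).length / n := by
            rw [Nat.le_div_iff_mul_le hn]
            omega
          simpa [hH] using this
      · refine ⟨x, v, y, hv, rfl, ?_⟩
        have h1 : L / n ≤ x.length / n + y.length / n + 1 := by
          rw [← hlen]
          exact div_add_div_ge hn _ _
        have h2 : n ≤ L / n := by
          rw [Nat.le_div_iff_mul_le hn]
          omega
        have h3 : lΓ + 1 ≤ n := by omega
        omega
    have hcsplit : LC A (x₀ ++ v₀ :: y₀) := by rw [hweq]; exact hc
    have hCp : LC A (x₀ ++ [v₀]) ∧ LC A (v₀ :: y₀) := lc_split.1 hcsplit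
    -- extract disjoint cycles from both pieces
    obtain ⟨ds₁, hm₁, hcnt₁⟩ := extract hn (x₀ ++ [v₀]).length (x₀ ++ [v₀]) le_rfl
    obtain ⟨ds₂, hm₂, hcnt₂⟩ := extract hn (v₀ :: y₀).length (v₀ :: y₀) le_rfl
    have hcnt₁' : x₀.length / n ≤ ds₁.length := by simpa using hcnt₁
    have hcnt₂' : y₀.length / n ≤ ds₂.length := by simpa using hcnt₂
    have hcnt : lΓ ≤ ds₁.length + ds₂.length := by omega
    set ds : List ℕ := ds₁ ++ ds₂ with hdsdef
    have hds1 : ∀ d ∈ ds, 1 ≤ d := by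
      intro d hd
      rcases List.mem_append.1 hd with h | h
      · exact marked_one_le ds₁ _ hm₁ d h
      · exact marked_one_le ds₂ _ hm₂ d h
    -- pigeonhole: two prefix sums congruent mod lΓ
    obtain ⟨r₁, r₂, hrne, hreq⟩ := Fintype.exists_ne_map_eq_of_card_lt
      (fun r : Fin (lΓ+1) => (⟨((ds.take (r : ℕ)).sum) % lΓ, Nat.mod_lt _ hl1⟩ : Fin lΓ))
      (by simp)
    obtain ⟨r, r', hrr, hr'le, hTeq⟩ :
        ∃ r r' : ℕ, r < r' ∧ r' ≤ lΓ ∧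
          ((ds.take r').sum) % lΓ = ((ds.take r).sum) % lΓ := by
      rcases Ne.lt_or_gt hrne with h | h
      · exact ⟨r₁, r₂, h, by omega, by simpa using congrArg Fin.val hreq.symm⟩
      · exact ⟨r₂, r₁, h, by omega, by simpa using congrArg Fin.val hreq⟩
    have hdslen : lΓ ≤ ds.length := by
      rw [hdsdef, List.length_append]; omega
    have hTlt : (ds.take r).sum < (ds.take r').sum :=
      sum_take_lt hds1 hrr (by omega)
    have hsum_r := take_sum_append ds₁ ds₂ r
    have hsum_r' := take_sum_append ds₁ ds₂ r'
    -- remove the blocks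
    obtain ⟨q₁, hq₁c, hq₁h, hq₁l, hq₁len, hq₁w⟩ :=
      removeBlock hL ds₁ (x₀ ++ [v₀]) (min r ds₁.length) (min r' ds₁.length) hm₁ hCp.1
        (by omega) (min_le_right _ _)
    obtain ⟨q₂, hq₂c, hq₂h, hq₂l, hq₂len, hq₂w⟩ :=
      removeBlock hL ds₂ (v₀ :: y₀) (r - ds₁.length) (r' - ds₁.length) hm₂ hCp.2
        (by omega) (by rw [hdsdef, List.length_append] at hdslen; omega)
    obtain ⟨y₁, rfl⟩ := head?_eq_cons (show q₂.head? = some v₀ by rw [hq₂h]; rfl)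
    obtain ⟨x₁, rfl⟩ := getLast?_eq_concat
      (show q₁.getLast? = some v₀ by rw [hq₁l]; exact List.getLast?_concat)
    -- the new, shorter walk
    have hnew_lc : LC A (x₁ ++ v₀ :: y₁) := lc_split.2 ⟨hq₁c, hq₂c⟩
    have hlen_eq : (x₁.length + y₁.length) + (ds.take r').sum = L + (ds.take r).sum := by
      rw [hsum_r, hsum_r']
      simp only [List.length_append, List.length_singleton, List.length_cons] at hq₁len hq₂len
      have hlen' : x₀.length + y₀.length = L := by
        have := congrArg List.length hweq
        simp only [List.length_append, List.length_cons] at this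
        omega
      omega
    have hLmod : (x₁.length + y₁.length) % lΓ = k % lΓ := by
      have h1 : Nat.ModEq lΓ ((x₁.length + y₁.length) + (ds.take r').sum)
          (L + (ds.take r').sum) := by
        calc (x₁.length + y₁.length) + (ds.take r').sum
            ≡ L + (ds.take r).sum [MOD lΓ] := by rw [hlen_eq]
          _ ≡ L + (ds.take r').sum [MOD lΓ] := Nat.ModEq.add_left L hTeq.symm
      have h3 := Nat.ModEq.add_right_cancel' _ h1
      exact h3.trans hmod
    have hLlt : x₁.length + y₁.length < L := by omega
    obtain ⟨c, hcc, hch, hcl, hclen, hcw⟩ :=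
      IH (x₁.length + y₁.length) hLlt x₁ y₁ v₀ hv₀ hnew_lc rfl hLmod
    refine ⟨c, hcc, ?_, ?_, hclen, ?_⟩
    · rw [hch, ← hweq]
      have e1 : (x₁ ++ v₀ :: y₁).head? = (x₁ ++ [v₀]).head? :=
        (head?_append_cons x₁ v₀ [] y₁).symm
      have e2 : (x₀ ++ v₀ :: y₀).head? = (x₀ ++ [v₀]).head? :=
        (head?_append_cons x₀ v₀ [] y₀).symm
      rw [e1, e2, hq₁h]
    · rw [hcl, ← hweq, List.getLast?_append_cons, List.getLast?_append_cons, hq₂l]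
    · have hw1 : lw A (x ++ v :: y) = lw A (x₀ ++ [v₀]) + lw A (v₀ :: y₀) := by
        rw [← hweq, lw_split]
      have hw2 : lw A (x₁ ++ v₀ :: y₁) = lw A (x₁ ++ [v₀]) + lw A (v₀ :: y₁) := lw_split _ _ _
      rw [hw1]
      calc lw A (x₀ ++ [v₀]) + lw A (v₀ :: y₀)
          ≤ lw A (x₁ ++ [v₀]) + lw A (v₀ :: y₁) := add_le_add hq₁w hq₂w
        _ = lw A (x₁ ++ v₀ :: y₁) := hw2.symm
        _ ≤ lw A c := hcw


lemma getLast?_ofFn {k : ℕ} (h : Fin (k+1) → Fin n) :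
    (List.ofFn h).getLast? = some (h (Fin.last k)) := by
  have hne : List.ofFn h ≠ [] := by simp
  rw [List.getLast?_eq_getLast hne, List.getLast_eq_getElem, List.getElem_ofFn]
  simp [Fin.last]

lemma head?_ofFn {k : ℕ} (h : Fin (k+1) → Fin n) :
    (List.ofFn h).head? = some (h 0) := by
  rw [List.ofFn_succ]; rfl

end PumpAux

theorem pumping_critical_walks {n : ℕ} (A : Fin n → Fin n → EReal)
    (hirr : ∀ i j : Fin n, ∃ (k : ℕ) (f : Fin (k + 1) → Fin n),
      IsWalk A f ∧ f 0 = i ∧ f (Fin.last k) = j)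
    (hLambdaLe : ∀ (k : ℕ) (f : Fin (k + 1) → Fin n), IsCycle A f → walkWeight A f ≤ 0)
    {lΓ : ℕ} (g : Fin (lΓ + 1) → Fin n) (hΓ : IsCycle A g)
    (hΓ0 : walkWeight A g = 0)
    (k₀ : ℕ) (i j : Fin n)
    {lW : ℕ} (f : Fin (lW + 1) → Fin n)
    (hW : IsWalk A f) (hWi : f 0 = i) (hWj : f (Fin.last lW) = j)
    (hWcong : lW % lΓ = k₀ % lΓ) (hWlen : n ^ 2 ≤ lW)
    (hvisit : ∃ (t : Fin (lW + 1)) (s : Fin (lΓ + 1)), f t = g s)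
    (hmax : ∀ (l : ℕ) (f' : Fin (l + 1) → Fin n), IsWalk A f' →
      f' 0 = i → f' (Fin.last l) = j → l % lΓ = k₀ % lΓ → n ^ 2 ≤ l →
      (∃ (t : Fin (l + 1)) (s : Fin (lΓ + 1)), f' t = g s) →
      walkWeight A f' ≤ walkWeight A f) :
    ∀ k, n ^ 2 ≤ k → k % lΓ = k₀ % lΓ → walkWeight A f ≤ mpPow A k i j := by
  classical
  intro k hk hkmod
  have hn : 0 < n := i.pos
  have hl1 : 0 < lΓ := hΓ.1
  have hinj : Function.Injective (fun t : Fin lΓ => g t.castSucc) := hΓ.2.2.2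
  have hln : lΓ ≤ n := by simpa using Fintype.card_le_of_injective _ hinj
  -- the critical cycle as a list
  set G := List.ofFn g with hGdef
  have hGc : PumpAux.LC A G := (PumpAux.lc_ofFn_iff g).2 hΓ.2.1
  have hGh : G.head? = some (g 0) := PumpAux.head?_ofFn g
  have hGl : G.getLast? = some (g 0) := by
    rw [PumpAux.getLast?_ofFn g, ← hΓ.2.2.1]
  have hGw : PumpAux.lw A G = 0 := by rw [hGdef, PumpAux.lw_ofFn]; exact hΓ0
  have hGlen : G.length = lΓ + 1 := by simp [hGdef]
  set P : Fin n → Prop := fun v => ∃ s, g s = v with hPdef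
  have hrot : ∀ v, P v → ∃ ρ, PumpAux.LC A ρ ∧ ρ.head? = some v ∧ ρ.getLast? = some v ∧
      ρ.length = lΓ + 1 ∧ PumpAux.lw A ρ = 0 := by
    rintro v ⟨s, hs⟩
    have hvG : v ∈ G := by
      rw [hGdef]
      exact List.mem_ofFn.2 ⟨s, hs⟩
    obtain ⟨ρ, h1, h2, h3, h4, h5⟩ := PumpAux.rotation hGc hGh hGl hvG
    exact ⟨ρ, h1, h2, h3, by rw [h4, hGlen], by rw [h5, hGw]⟩
  have hham : lΓ = n → ∀ w : Fin n, P w := by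
    intro hH w
    have hcards : Fintype.card (Fin lΓ) = Fintype.card (Fin n) := by simp [hH]
    have hbij := (Fintype.bijective_iff_injective_and_card
      (fun t : Fin lΓ => g t.castSucc)).2 ⟨hinj, hcards⟩
    obtain ⟨t, ht⟩ := hbij.2 w
    exact ⟨t.castSucc, ht⟩
  -- the walk as a list
  set W := List.ofFn f with hWdef
  have hWc : PumpAux.LC A W := (PumpAux.lc_ofFn_iff f).2 hW
  have hWw : PumpAux.lw A W = walkWeight A f := PumpAux.lw_ofFn f
  have hWh : W.head? = some i := by rw [PumpAux.head?_ofFn f, hWi]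
  have hWl : W.getLast? = some j := by rw [PumpAux.getLast?_ofFn f, hWj]
  have hWlen' : W.length = lW + 1 := by simp [hWdef]
  -- split the walk at the visit of Γ
  obtain ⟨t, s, hts⟩ := hvisit
  have ht1 : (t : ℕ) < W.length := by rw [hWlen']; exact t.isLt
  have hWt : W.get ⟨(t : ℕ), ht1⟩ = f t := by
    simp only [hWdef, List.get_eq_getElem, List.getElem_ofFn]
  have hsplit : W = W.take (t : ℕ) ++ f t :: W.drop ((t : ℕ) + 1) := by
    conv_lhs => rw [← List.take_append_drop (t : ℕ) W,
      List.drop_eq_getElem_cons ht1]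
    rw [← hWt]
    simp [List.get_eq_getElem]
  have hlens : (W.take (t : ℕ)).length + (W.drop ((t : ℕ) + 1)).length = lW := by
    simp only [List.length_take, List.length_drop, hWlen']
    have := t.isLt
    omega
  have hmod : lW % lΓ = k % lΓ := by rw [hWcong, hkmod]
  obtain ⟨c, hcc, hch, hcl, hclen, hcw⟩ :=
    PumpAux.loop k P hrot hham hLambdaLe hn hl1 hln hk lW
      (W.take (t : ℕ)) (W.drop ((t : ℕ) + 1)) (f t) ⟨s, hts.symm⟩
      (by rw [← hsplit]; exact hWc) hlens hmod
  have hch' : c.head? = some i := by rw [hch, ← hsplit, hWh]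
  have hcl' : c.getLast? = some j := by rw [hcl, ← hsplit, hWl]
  calc walkWeight A f = PumpAux.lw A W := hWw.symm
    _ = PumpAux.lw A (W.take (t : ℕ) ++ f t :: W.drop ((t : ℕ) + 1)) := by rw [← hsplit]
    _ ≤ PumpAux.lw A c := hcw
    _ ≤ mpPow A k i j := PumpAux.list_le_pow k c hcc hclen i j hch' hcl'
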